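/- On ℝ⁶ with coordinates (x, y, a, b, c, κ), define the smooth vector fields (on the open set where a ≠ 0): X(p) = (a, c, b, κ·a, (1+b·c)/a, 0) and Y₀(p) = (0, 0, 0, 0, 0, 1); for vector fields V, W define the Lie bracket [V, W](p) = DW(p)[V(p)] − DV(p)[W(p)], and set Y_{j+1} = [X, Y_j] for j = 0, 1, 2, 3. Then at every point p with a ≠ 0, the six vectors X(p), Y₀(p), Y₁(p), Y₂(p), Y₃(p), Y₄(p) span ℝ⁶. -/

import Mathlib

/-- The vector field `X = a∂x + c∂y + b∂a + κa∂b + ((1+bc)/a)∂c` on `ℝ⁶` with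
coordinates `(x, y, a, b, c, κ) = (p 0, …, p 5)`. -/
noncomputable def Xvf (p : Fin 6 → ℝ) : Fin 6 → ℝ :=
  ![p 2, p 4, p 3, p 5 * p 2, (1 + p 3 * p 4) / p 2, 0]

/-- Lie bracket of vector fields on `ℝ⁶`:
`[V, W](p) = DW(p)[V(p)] − DV(p)[W(p)]`. -/
noncomputable def lieBr (V W : (Fin 6 → ℝ) → Fin 6 → ℝ) : (Fin 6 → ℝ) → Fin 6 → ℝ :=
  fun p => fderiv ℝ W p (V p) - fderiv ℝ V p (W p)

/-- The iterated brackets `Y₀ = ∂κ`, `Y_{j+1} = [X, Y_j]`. -/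
noncomputable def Yvf : ℕ → (Fin 6 → ℝ) → Fin 6 → ℝ
  | 0 => fun _ => ![0, 0, 0, 0, 0, 1]
  | j + 1 => lieBr Xvf (Yvf j)

/-! ### Auxiliary material -/

namespace CartanAux

section vec6
variable {α : Type*} (a b c d e f : α)
@[simp] lemma vec6_0 : ![a,b,c,d,e,f] 0 = a := rfl
@[simp] lemma vec6_1 : ![a,b,c,d,e,f] 1 = b := rfl
@[simp] lemma vec6_2 : ![a,b,c,d,e,f] 2 = c := rfl
@[simp] lemma vec6_3 : ![a,b,c,d,e,f] 3 = d := rfl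
@[simp] lemma vec6_4 : ![a,b,c,d,e,f] 4 = e := rfl
@[simp] lemma vec6_5 : ![a,b,c,d,e,f] 5 = f := rfl
end vec6

section single6
@[simp] lemma single6_0 : (Pi.single (0:Fin 6) (1:ℝ) : Fin 6 → ℝ) = ![1,0,0,0,0,0] := by
  funext i; fin_cases i <;> rfl
@[simp] lemma single6_1 : (Pi.single (1:Fin 6) (1:ℝ) : Fin 6 → ℝ) = ![0,1,0,0,0,0] := by
  funext i; fin_cases i <;> rfl
@[simp] lemma single6_2 : (Pi.single (2:Fin 6) (1:ℝ) : Fin 6 → ℝ) = ![0,0,1,0,0,0] := by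
  funext i; fin_cases i <;> rfl
@[simp] lemma single6_3 : (Pi.single (3:Fin 6) (1:ℝ) : Fin 6 → ℝ) = ![0,0,0,1,0,0] := by
  funext i; fin_cases i <;> rfl
@[simp] lemma single6_4 : (Pi.single (4:Fin 6) (1:ℝ) : Fin 6 → ℝ) = ![0,0,0,0,1,0] := by
  funext i; fin_cases i <;> rfl
@[simp] lemma single6_5 : (Pi.single (5:Fin 6) (1:ℝ) : Fin 6 → ℝ) = ![0,0,0,0,0,1] := by
  funext i; fin_cases i <;> rfl
end single6


end CartanAux

namespace CartanAux

/-- coordinate projection as a continuous linear map -/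
noncomputable def pr (i : Fin 6) : (Fin 6 → ℝ) →L[ℝ] ℝ := ContinuousLinearMap.proj i

lemma hasF_pr (i : Fin 6) (p : Fin 6 → ℝ) :
    HasFDerivAt (fun q : Fin 6 → ℝ => q i) (pr i) p :=
  hasFDerivAt_apply i p

theorem hasF_div {c d : (Fin 6 → ℝ) → ℝ} {c' d' : (Fin 6 → ℝ) →L[ℝ] ℝ} {x : Fin 6 → ℝ}
    (hc : HasFDerivAt c c' x) (hd : HasFDerivAt d d' x) (hx : d x ≠ 0) :
    HasFDerivAt (fun y => c y / d y)
      ((d x)⁻¹ • c' - (c x / d x ^ 2) • d') x := by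
  have h1 : HasFDerivAt (fun y => (d y)⁻¹) ((-(d x ^ 2)⁻¹) • d') x := by
    have h := (hasFDerivAt_inv hx).comp x hd
    refine h.congr_fderiv ?_
    ext v
    simp [mul_comm]
  have h2 := hc.mul h1
  have hfun : (fun y => c y / d y) = fun y => c y * (d y)⁻¹ := by
    funext y; rw [div_eq_mul_inv]
  rw [hfun]
  refine h2.congr_fderiv ?_
  ext v
  simp only [ContinuousLinearMap.sub_apply, ContinuousLinearMap.add_apply,
    ContinuousLinearMap.smul_apply, smul_eq_mul]
  field_simp
  ring

/-- the derivative row of the component `(1 + p 3 * p 4)/p 2` -/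
noncomputable def L4 (p : Fin 6 → ℝ) : (Fin 6 → ℝ) →L[ℝ] ℝ :=
  (p 2)⁻¹ • (p 3 • pr 4 + p 4 • pr 3) - ((1 + p 3 * p 4) / p 2 ^ 2) • pr 2

lemma hasF_u (p : Fin 6 → ℝ) (hp : p 2 ≠ 0) :
    HasFDerivAt (fun q : Fin 6 → ℝ => (1 + q 3 * q 4) / q 2) (L4 p) p :=
  hasF_div (((hasF_pr 3 p).mul (hasF_pr 4 p)).const_add 1) (hasF_pr 2 p) hp

/-- the derivative of `Xvf` -/
noncomputable def DX (p : Fin 6 → ℝ) : (Fin 6 → ℝ) →L[ℝ] (Fin 6 → ℝ) :=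
  ContinuousLinearMap.pi ![pr 2, pr 4, pr 3, p 5 • pr 2 + p 2 • pr 5, L4 p, 0]

lemma hasF_X (p : Fin 6 → ℝ) (hp : p 2 ≠ 0) : HasFDerivAt Xvf (DX p) p := by
  have hXf : Xvf = fun q (i : Fin 6) =>
      ![fun q : Fin 6 → ℝ => q 2, fun q => q 4, fun q => q 3,
        fun q => q 5 * q 2, fun q => (1 + q 3 * q 4) / q 2, fun _ => (0 : ℝ)] i q := by
    funext q i
    fin_cases i <;> rfl
  rw [hXf, DX]
  refine hasFDerivAt_pi.2 ?_
  intro i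
  fin_cases i
  · exact hasF_pr 2 p
  · exact hasF_pr 4 p
  · exact hasF_pr 3 p
  · exact (hasF_pr 5 p).mul (hasF_pr 2 p)
  · exact hasF_u p hp
  · exact hasFDerivAt_const 0 p

/-- derivative of the explicit formula for `Y₁` -/
noncomputable def DY1 : (Fin 6 → ℝ) →L[ℝ] (Fin 6 → ℝ) :=
  ContinuousLinearMap.pi ![0, 0, 0, -pr 2, 0, 0]

lemma hasF_Y1 (p : Fin 6 → ℝ) :
    HasFDerivAt (fun q : Fin 6 → ℝ => ![0, 0, 0, -q 2, 0, 0]) DY1 p := by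
  have hf : (fun q : Fin 6 → ℝ => ![(0:ℝ), 0, 0, -q 2, 0, 0]) = fun q (i : Fin 6) =>
      ![fun _ : Fin 6 → ℝ => (0:ℝ), fun _ => 0, fun _ => 0,
        fun q : Fin 6 → ℝ => -q 2, fun _ => 0, fun _ => 0] i q := by
    funext q i; fin_cases i <;> rfl
  rw [hf, DY1]
  refine hasFDerivAt_pi.2 ?_
  intro i
  fin_cases i
  · exact hasFDerivAt_const 0 p
  · exact hasFDerivAt_const 0 p
  · exact hasFDerivAt_const 0 p
  · exact (hasF_pr 2 p).neg
  · exact hasFDerivAt_const 0 p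
  · exact hasFDerivAt_const 0 p

/-- derivative of the explicit formula for `Y₂` -/
noncomputable def DY2 : (Fin 6 → ℝ) →L[ℝ] (Fin 6 → ℝ) :=
  ContinuousLinearMap.pi ![0, 0, pr 2, -pr 3, pr 4, 0]

lemma hasF_Y2 (p : Fin 6 → ℝ) :
    HasFDerivAt (fun q : Fin 6 → ℝ => ![0, 0, q 2, -q 3, q 4, 0]) DY2 p := by
  have hf : (fun q : Fin 6 → ℝ => ![(0:ℝ), 0, q 2, -q 3, q 4, 0]) = fun q (i : Fin 6) =>
      ![fun _ : Fin 6 → ℝ => (0:ℝ), fun _ => 0, fun q : Fin 6 → ℝ => q 2,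
        fun q : Fin 6 → ℝ => -q 3, fun q : Fin 6 → ℝ => q 4, fun _ => 0] i q := by
    funext q i; fin_cases i <;> rfl
  rw [hf, DY2]
  refine hasFDerivAt_pi.2 ?_
  intro i
  fin_cases i
  · exact hasFDerivAt_const 0 p
  · exact hasFDerivAt_const 0 p
  · exact hasF_pr 2 p
  · exact (hasF_pr 3 p).neg
  · exact hasF_pr 4 p
  · exact hasFDerivAt_const 0 p

/-- derivative of the explicit formula for `Y₃` -/
noncomputable def DY3 (p : Fin 6 → ℝ) : (Fin 6 → ℝ) →L[ℝ] (Fin 6 → ℝ) :=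
  ContinuousLinearMap.pi
    ![-pr 2, -pr 4, (2:ℝ) • pr 3, -((2:ℝ) • (p 5 • pr 2 + p 2 • pr 5)), (2:ℝ) • L4 p, 0]

lemma hasF_Y3 (p : Fin 6 → ℝ) (hp : p 2 ≠ 0) :
    HasFDerivAt
      (fun q : Fin 6 → ℝ =>
        ![-q 2, -q 4, 2 * q 3, -(2 * (q 5 * q 2)), 2 * ((1 + q 3 * q 4) / q 2), 0])
      (DY3 p) p := by
  have hf : (fun q : Fin 6 → ℝ =>
      ![-q 2, -q 4, 2 * q 3, -(2 * (q 5 * q 2)), 2 * ((1 + q 3 * q 4) / q 2), (0:ℝ)])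
      = fun q (i : Fin 6) =>
      ![fun q : Fin 6 → ℝ => -q 2, fun q : Fin 6 → ℝ => -q 4,
        fun q : Fin 6 → ℝ => 2 * q 3, fun q : Fin 6 → ℝ => -(2 * (q 5 * q 2)),
        fun q : Fin 6 → ℝ => 2 * ((1 + q 3 * q 4) / q 2), fun _ => (0:ℝ)] i q := by
    funext q i; fin_cases i <;> rfl
  rw [hf, DY3]
  refine hasFDerivAt_pi.2 ?_
  intro i
  fin_cases i
  · exact (hasF_pr 2 p).neg
  · exact (hasF_pr 4 p).neg
  · exact (hasF_pr 3 p).const_mul 2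
  · exact (((hasF_pr 5 p).mul (hasF_pr 2 p)).const_mul 2).neg
  · exact (hasF_u p hp).const_mul 2
  · exact hasFDerivAt_const 0 p

lemma openU : IsOpen {q : Fin 6 → ℝ | q 2 ≠ 0} :=
  isOpen_ne_fun (continuous_apply 2) continuous_const

end CartanAux

open CartanAux in
lemma Yvf1_eq (q : Fin 6 → ℝ) (hq : q 2 ≠ 0) :
    Yvf 1 q = ![0, 0, 0, -q 2, 0, 0] := by
  show fderiv ℝ (Yvf 0) q (Xvf q) - fderiv ℝ Xvf q (Yvf 0 q) = _
  have h0 : fderiv ℝ (Yvf 0) q = 0 := fderiv_const_apply _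
  rw [h0, (hasF_X q hq).fderiv]
  funext i
  fin_cases i <;>
    (try simp [DX, L4, pr, Yvf, Xvf, Matrix.cons_val_succ]) <;> (try field_simp) <;> (try ring)

open CartanAux in
lemma Yvf2_eq (q : Fin 6 → ℝ) (hq : q 2 ≠ 0) :
    Yvf 2 q = ![0, 0, q 2, -q 3, q 4, 0] := by
  have hU : {r : Fin 6 → ℝ | r 2 ≠ 0} ∈ nhds q := openU.mem_nhds hq
  have hev : Yvf 1 =ᶠ[nhds q] (fun r => ![0, 0, 0, -r 2, 0, 0]) :=
    Filter.eventually_of_mem hU (fun r hr => Yvf1_eq r hr)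
  show fderiv ℝ (Yvf 1) q (Xvf q) - fderiv ℝ Xvf q (Yvf 1 q) = _
  rw [hev.fderiv_eq, (hasF_Y1 q).fderiv, (hasF_X q hq).fderiv, Yvf1_eq q hq]
  funext i
  fin_cases i <;>
    (try simp [DX, DY1, L4, pr, Xvf, Matrix.cons_val_succ]) <;> (try field_simp) <;> (try ring)

open CartanAux in
lemma Yvf3_eq (q : Fin 6 → ℝ) (hq : q 2 ≠ 0) :
    Yvf 3 q = ![-q 2, -q 4, 2 * q 3, -(2 * (q 5 * q 2)), 2 * ((1 + q 3 * q 4) / q 2), 0] := by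
  have hU : {r : Fin 6 → ℝ | r 2 ≠ 0} ∈ nhds q := openU.mem_nhds hq
  have hev : Yvf 2 =ᶠ[nhds q] (fun r => ![0, 0, r 2, -r 3, r 4, 0]) :=
    Filter.eventually_of_mem hU (fun r hr => Yvf2_eq r hr)
  show fderiv ℝ (Yvf 2) q (Xvf q) - fderiv ℝ Xvf q (Yvf 2 q) = _
  rw [hev.fderiv_eq, (hasF_Y2 q).fderiv, (hasF_X q hq).fderiv, Yvf2_eq q hq]
  funext i
  fin_cases i <;>
    (try simp [DX, DY2, L4, pr, Xvf, Matrix.cons_val_succ]) <;> (try field_simp) <;> (try ring)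

open CartanAux in
lemma Yvf4_eq (q : Fin 6 → ℝ) (hq : q 2 ≠ 0) :
    Yvf 4 q = ![-(3 * q 3), -(3 * ((1 + q 3 * q 4) / q 2)), 4 * (q 5 * q 2),
      -(4 * (q 5 * q 3)), 4 * (q 5 * q 4), 0] := by
  have hU : {r : Fin 6 → ℝ | r 2 ≠ 0} ∈ nhds q := openU.mem_nhds hq
  have hev : Yvf 3 =ᶠ[nhds q]
      (fun r => ![-r 2, -r 4, 2 * r 3, -(2 * (r 5 * r 2)), 2 * ((1 + r 3 * r 4) / r 2), 0]) :=
    Filter.eventually_of_mem hU (fun r hr => Yvf3_eq r hr)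
  show fderiv ℝ (Yvf 3) q (Xvf q) - fderiv ℝ Xvf q (Yvf 3 q) = _
  rw [hev.fderiv_eq, (hasF_Y3 q hq).fderiv, (hasF_X q hq).fderiv, Yvf3_eq q hq]
  funext i
  fin_cases i <;>
    (try simp [DX, DY3, L4, pr, Xvf, Matrix.cons_val_succ]) <;> (try field_simp) <;> (try ring)

/-- At every point with `a ≠ 0`, the six vectors
`X(p), Y₀(p), Y₁(p), Y₂(p), Y₃(p), Y₄(p)` span `ℝ⁶`: the rank-2 distribution
`{X, ∂κ}` is bracket generating with derived length 4. -/
theorem cartan_prolongation_bracket_generating (p : Fin 6 → ℝ) (hp : p 2 ≠ 0) :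
    Submodule.span ℝ {Xvf p, Yvf 0 p, Yvf 1 p, Yvf 2 p, Yvf 3 p, Yvf 4 p} = ⊤ := by
  set S := Submodule.span ℝ {Xvf p, Yvf 0 p, Yvf 1 p, Yvf 2 p, Yvf 3 p, Yvf 4 p} with hS
  have hX : Xvf p ∈ S := Submodule.subset_span (by simp)
  have hY0 : Yvf 0 p ∈ S := Submodule.subset_span (by simp)
  have hY1 : Yvf 1 p ∈ S := Submodule.subset_span (by simp)
  have hY2 : Yvf 2 p ∈ S := Submodule.subset_span (by simp)
  have hY3 : Yvf 3 p ∈ S := Submodule.subset_span (by simp)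
  have hY4 : Yvf 4 p ∈ S := Submodule.subset_span (by simp)
  set u : ℝ := (1 + p 3 * p 4) / p 2 with hu
  have key : p 2 * u = 1 + p 3 * p 4 := by
    rw [hu]; field_simp
  -- e₅
  have m5 : (Pi.single (5 : Fin 6) (1 : ℝ) : Fin 6 → ℝ) ∈ S := by
    have : (Pi.single (5 : Fin 6) (1 : ℝ) : Fin 6 → ℝ) = Yvf 0 p := by
      show _ = ![(0:ℝ),0,0,0,0,1]
      funext i; fin_cases i <;> simp
    rw [this]; exact hY0
  -- e₃
  have m3 : (Pi.single (3 : Fin 6) (1 : ℝ) : Fin 6 → ℝ) ∈ S := by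
    have : (Pi.single (3 : Fin 6) (1 : ℝ) : Fin 6 → ℝ) = (-(p 2)⁻¹) • Yvf 1 p := by
      rw [Yvf1_eq p hp]; funext i; fin_cases i <;> simp <;> field_simp
    rw [this]; exact S.smul_mem _ hY1
  -- A = (0,0,a,0,c,0)
  have mA : (![0, 0, p 2, 0, p 4, 0] : Fin 6 → ℝ) ∈ S := by
    have : (![0, 0, p 2, 0, p 4, 0] : Fin 6 → ℝ)
        = Yvf 2 p + (p 3) • (Pi.single (3 : Fin 6) (1 : ℝ) : Fin 6 → ℝ) := by
      rw [Yvf2_eq p hp]; funext i; fin_cases i <;> simp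
    rw [this]; exact S.add_mem hY2 (S.smul_mem _ m3)
  -- B = (0,0,3b,0,3u,0)
  have mB : (![0, 0, 3 * p 3, 0, 3 * u, 0] : Fin 6 → ℝ) ∈ S := by
    have : (![0, 0, 3 * p 3, 0, 3 * u, 0] : Fin 6 → ℝ)
        = Xvf p + Yvf 3 p + (p 5 * p 2) • (Pi.single (3 : Fin 6) (1 : ℝ) : Fin 6 → ℝ) := by
      rw [Yvf3_eq p hp]; funext i; fin_cases i <;> simp [Xvf, hu] <;> (try ring)
    rw [this]; exact S.add_mem (S.add_mem hX hY3) (S.smul_mem _ m3)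
  -- e₂ and e₄
  have m2 : (Pi.single (2 : Fin 6) (1 : ℝ) : Fin 6 → ℝ) ∈ S := by
    have : (Pi.single (2 : Fin 6) (1 : ℝ) : Fin 6 → ℝ)
        = u • (![0, 0, p 2, 0, p 4, 0] : Fin 6 → ℝ)
          + (-(p 4 / 3)) • (![0, 0, 3 * p 3, 0, 3 * u, 0] : Fin 6 → ℝ) := by
      funext i; fin_cases i <;> simp <;> nlinarith [key]
    rw [this]; exact S.add_mem (S.smul_mem _ mA) (S.smul_mem _ mB)
  have m4 : (Pi.single (4 : Fin 6) (1 : ℝ) : Fin 6 → ℝ) ∈ S := by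
    have : (Pi.single (4 : Fin 6) (1 : ℝ) : Fin 6 → ℝ)
        = (-(p 3)) • (![0, 0, p 2, 0, p 4, 0] : Fin 6 → ℝ)
          + (p 2 / 3) • (![0, 0, 3 * p 3, 0, 3 * u, 0] : Fin 6 → ℝ) := by
      funext i; fin_cases i <;> simp <;> nlinarith [key]
    rw [this]; exact S.add_mem (S.smul_mem _ mA) (S.smul_mem _ mB)
  -- P = (a,c,0,0,0,0)
  have mP : (![p 2, p 4, 0, 0, 0, 0] : Fin 6 → ℝ) ∈ S := by
    have : (![p 2, p 4, 0, 0, 0, 0] : Fin 6 → ℝ)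
        = Xvf p + (-(p 3)) • (Pi.single (2 : Fin 6) (1 : ℝ) : Fin 6 → ℝ)
          + (-(p 5 * p 2)) • (Pi.single (3 : Fin 6) (1 : ℝ) : Fin 6 → ℝ)
          + (-u) • (Pi.single (4 : Fin 6) (1 : ℝ) : Fin 6 → ℝ) := by
      funext i; fin_cases i <;> simp [Xvf, hu]
    rw [this]
    exact S.add_mem (S.add_mem (S.add_mem hX (S.smul_mem _ m2)) (S.smul_mem _ m3))
      (S.smul_mem _ m4)
  -- Q = (-3b,-3u,0,0,0,0)
  have mQ : (![-(3 * p 3), -(3 * u), 0, 0, 0, 0] : Fin 6 → ℝ) ∈ S := by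
    have : (![-(3 * p 3), -(3 * u), 0, 0, 0, 0] : Fin 6 → ℝ)
        = Yvf 4 p + (-(4 * (p 5 * p 2))) • (Pi.single (2 : Fin 6) (1 : ℝ) : Fin 6 → ℝ)
          + (4 * (p 5 * p 3)) • (Pi.single (3 : Fin 6) (1 : ℝ) : Fin 6 → ℝ)
          + (-(4 * (p 5 * p 4))) • (Pi.single (4 : Fin 6) (1 : ℝ) : Fin 6 → ℝ) := by
      rw [Yvf4_eq p hp]; funext i; fin_cases i <;> simp [hu]
    rw [this]
    exact S.add_mem (S.add_mem (S.add_mem hY4 (S.smul_mem _ m2)) (S.smul_mem _ m3))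
      (S.smul_mem _ m4)
  -- e₀ and e₁
  have m0 : (Pi.single (0 : Fin 6) (1 : ℝ) : Fin 6 → ℝ) ∈ S := by
    have : (Pi.single (0 : Fin 6) (1 : ℝ) : Fin 6 → ℝ)
        = u • (![p 2, p 4, 0, 0, 0, 0] : Fin 6 → ℝ)
          + (p 4 / 3) • (![-(3 * p 3), -(3 * u), 0, 0, 0, 0] : Fin 6 → ℝ) := by
      funext i; fin_cases i <;> simp <;> nlinarith [key]
    rw [this]; exact S.add_mem (S.smul_mem _ mP) (S.smul_mem _ mQ)
  have m1 : (Pi.single (1 : Fin 6) (1 : ℝ) : Fin 6 → ℝ) ∈ S := by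
    have : (Pi.single (1 : Fin 6) (1 : ℝ) : Fin 6 → ℝ)
        = (-(p 3)) • (![p 2, p 4, 0, 0, 0, 0] : Fin 6 → ℝ)
          + (-(p 2 / 3)) • (![-(3 * p 3), -(3 * u), 0, 0, 0, 0] : Fin 6 → ℝ) := by
      funext i; fin_cases i <;> simp <;> nlinarith [key]
    rw [this]; exact S.add_mem (S.smul_mem _ mP) (S.smul_mem _ mQ)
  -- conclude
  rw [eq_top_iff, ← (Pi.basisFun ℝ (Fin 6)).span_eq, Submodule.span_le]
  rintro _ ⟨i, rfl⟩
  rw [Pi.basisFun_apply]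
  fin_cases i
  exacts [m0, m1, m2, m3, m4, m5]
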